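/- arXiv:1706.05248 — 7 statements merged into one kernel-verified Lean document; each statement's English description precedes it below -/
import Mathlib

section
/- For every k ≥ 1, every [1,2]-set of the spider tree T_k has cardinality at least k + 1. -/
/-- Boolean adjacency of the spider tree `T_k`: root `none`, and branch
vertices `some (i, 0) = a_i`, `some (i, 1) = b_i`, `some (i, 2) = c_i`,
with edges `r–a_i`, `a_i–b_i`, `b_i–c_i`. -/
def spiderAdj (k : ℕ) : Option (Fin k × Fin 3) → Option (Fin k × Fin 3) → Bool
  | none, some (_, j) => decide (j = 0)
  | some (_, j), none => decide (j = 0)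
  | some (i, j), some (i', j') =>
      decide (i = i') && (decide ((j : ℕ) + 1 = (j' : ℕ)) || decide ((j' : ℕ) + 1 = (j : ℕ)))
  | none, none => false

/-- The spider tree `T_k` on `3k+1` vertices. -/
def spider (k : ℕ) : SimpleGraph (Option (Fin k × Fin 3)) where
  Adj x y := spiderAdj k x y = true
  symm := by
    constructor
    rintro (_ | ⟨i, j⟩) (_ | ⟨i', j'⟩) h <;> simp [spiderAdj] at h ⊢
    · exact h
    · exact h
    · exact ⟨h.1.symm, h.2.symm⟩
  loopless := by
    constructor
    rintro (_ | ⟨i, j⟩) h <;> simp [spiderAdj] at h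

instance (k : ℕ) : DecidableRel (spider k).Adj :=
  fun x y => inferInstanceAs (Decidable (spiderAdj k x y = true))


lemma adj_c (k : ℕ) (i : Fin k) (v : Option (Fin k × Fin 3)) :
    (spider k).Adj (some (i, 2)) v ↔ v = some (i, 1) := by
  rcases v with _ | ⟨i', j'⟩ <;> simp [spider, spiderAdj]
  constructor
  · rintro ⟨rfl, h⟩
    have := j'.isLt
    have : (j' : ℕ) = 1 := by omega
    exact ⟨rfl, by omega⟩
  · rintro ⟨rfl, rfl⟩
    exact ⟨rfl, by omega⟩

lemma adj_r (k : ℕ) (v : Option (Fin k × Fin 3)) :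
    (spider k).Adj none v ↔ ∃ i, v = some (i, 0) := by
  rcases v with _ | ⟨i', j'⟩ <;> simp [spider, spiderAdj]

/-- `S` is a `[1,2]`-set of `G`: every vertex outside `S` has at least one and
at most two neighbors in `S`. -/
def IsOneTwoSet {V : Type*} [Fintype V] [DecidableEq V] (G : SimpleGraph V)
    [DecidableRel G.Adj] (S : Finset V) : Prop :=
  ∀ v, v ∉ S → 1 ≤ (G.neighborFinset v ∩ S).card ∧ (G.neighborFinset v ∩ S).card ≤ 2

theorem spider_oneTwoSet_card_ge (k : ℕ) (hk : 1 ≤ k)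
    (S : Finset (Option (Fin k × Fin 3))) (hS : IsOneTwoSet (spider k) S) :
    k + 1 ≤ S.card := by
  classical
  set F : Option (Fin k) → Finset (Option (Fin k × Fin 3)) :=
    fun t => S.filter (fun v => Option.map Prod.fst v = t) with hF
  have hcard : S.card = ∑ t : Option (Fin k), (F t).card :=
    Finset.card_eq_sum_card_fiberwise (fun v _ => Finset.mem_univ _)
  have hbc : ∀ i : Fin k, some (i, 1) ∈ S ∨ some (i, 2) ∈ S := by
    intro i
    by_cases h2 : some (i, (2 : Fin 3)) ∈ S
    · exact Or.inr h2
    · left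
      obtain ⟨h1, -⟩ := hS _ h2
      obtain ⟨v, hv⟩ := Finset.card_pos.mp h1
      rw [Finset.mem_inter, SimpleGraph.mem_neighborFinset, adj_c] at hv
      obtain ⟨rfl, hv⟩ := hv
      exact hv
  have hleg : ∀ i : Fin k, 1 ≤ (F (some i)).card := by
    intro i
    apply Finset.card_pos.mpr
    rcases hbc i with h | h
    · exact ⟨some (i, 1), Finset.mem_filter.mpr ⟨h, rfl⟩⟩
    · exact ⟨some (i, 2), Finset.mem_filter.mpr ⟨h, rfl⟩⟩
  rw [hcard, Fintype.sum_option]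
  by_cases hr : (none : Option (Fin k × Fin 3)) ∈ S
  · have h0 : 1 ≤ (F none).card :=
      Finset.card_pos.mpr ⟨none, Finset.mem_filter.mpr ⟨hr, rfl⟩⟩
    have : (k : ℕ) ≤ ∑ i : Fin k, (F (some i)).card :=
      le_trans (by simp) (Finset.sum_le_sum fun i _ => hleg i)
    omega
  · obtain ⟨h1, -⟩ := hS _ hr
    obtain ⟨v, hv⟩ := Finset.card_pos.mp h1
    rw [Finset.mem_inter, SimpleGraph.mem_neighborFinset, adj_r] at hv
    obtain ⟨⟨i, rfl⟩, hvS⟩ := hv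
    have h2 : 2 ≤ (F (some i)).card := by
      apply Finset.one_lt_card.mpr
      refine ⟨some (i, 0), Finset.mem_filter.mpr ⟨hvS, rfl⟩, ?_⟩
      rcases hbc i with h | h
      · exact ⟨some (i, 1), Finset.mem_filter.mpr ⟨h, rfl⟩, by simp⟩
      · exact ⟨some (i, 2), Finset.mem_filter.mpr ⟨h, rfl⟩, by simp⟩
    have hsum : ∑ j : Fin k, (F (some j)).card =
        (F (some i)).card + ∑ j ∈ Finset.univ.erase i, (F (some j)).card :=
      (Finset.add_sum_erase _ _ (Finset.mem_univ i)).symm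
    have hrest : (k - 1 : ℕ) ≤ ∑ j ∈ Finset.univ.erase i, (F (some j)).card := by
      calc (k - 1 : ℕ) = (Finset.univ.erase i).card := by
            rw [Finset.card_erase_of_mem (Finset.mem_univ i)]; simp
        _ ≤ _ := le_trans (by simp) (Finset.sum_le_sum fun j _ => hleg j)
    omega
end

section
/- For every k ≥ 1, the minimum cardinality of a [1,2]-set of the spider tree T_k equals k + 1, i.e. γ_{[1,2]}(T_k) = k + 1. -/
lemma spider_adj_iff (k : ℕ) (x y : Option (Fin k × Fin 3)) :
    (spider k).Adj x y ↔ spiderAdj k x y = true := Iff.rfl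

lemma spider_nbr_c (k : ℕ) (i : Fin k) :
    (spider k).neighborFinset (some (i, 2)) = {some (i, 1)} := by
  ext x
  rcases x with _ | ⟨i', j'⟩ <;>
    simp [SimpleGraph.mem_neighborFinset, spider_adj_iff, spiderAdj, Prod.ext_iff, Fin.ext_iff]
  have := j'.isLt
  omega

lemma spider_nbr_a (k : ℕ) (i : Fin k) :
    (spider k).neighborFinset (some (i, 0)) = {none, some (i, 1)} := by
  ext x
  rcases x with _ | ⟨i', j'⟩ <;>
    simp [SimpleGraph.mem_neighborFinset, spider_adj_iff, spiderAdj, Prod.ext_iff, Fin.ext_iff, -Fin.val_eq_zero_iff]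
  have := j'.isLt
  omega

lemma spider_nbr_b (k : ℕ) (i : Fin k) :
    (spider k).neighborFinset (some (i, 1)) = {some (i, 0), some (i, 2)} := by
  ext x
  rcases x with _ | ⟨i', j'⟩ <;>
    simp [SimpleGraph.mem_neighborFinset, spider_adj_iff, spiderAdj, Prod.ext_iff, Fin.ext_iff, -Fin.val_eq_zero_iff]
  have := j'.isLt
  omega

lemma spider_adj_root (k : ℕ) (x : Option (Fin k × Fin 3)) :
    (spider k).Adj none x ↔ ∃ i, x = some (i, 0) := by
  rcases x with _ | ⟨i', j'⟩ <;>
    simp [spider_adj_iff, spiderAdj, Prod.ext_iff, Fin.ext_iff, -Fin.val_eq_zero_iff]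

theorem spider_gamma_oneTwo_eq (k : ℕ) (hk : 1 ≤ k) :
    IsLeast {n : ℕ | ∃ S : Finset (Option (Fin k × Fin 3)),
      IsOneTwoSet (spider k) S ∧ S.card = n} (k + 1) := by
  constructor
  · -- membership: S = {none} ∪ {b_i}
    refine ⟨insert none (Finset.univ.image fun i : Fin k => some (i, 1)), ?_, ?_⟩
    · intro v hv
      rcases v with _ | ⟨i, j⟩
      · simp at hv
      · have hj : j ≠ 1 := by
          rintro rfl
          exact hv (by simp)
        set T : Finset (Option (Fin k × Fin 3)) := insert none (Finset.univ.image fun i : Fin k => some (i, 1)) with hT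
        have key0 : 1 ≤ ((spider k).neighborFinset (some (i, 0)) ∩ T).card ∧
            ((spider k).neighborFinset (some (i, 0)) ∩ T).card ≤ 2 := by
          rw [spider_nbr_a]
          have : ({none, some (i, 1)} : Finset (Option (Fin k × Fin 3))) ∩ T =
              {none, some (i, 1)} := by
            rw [Finset.inter_eq_left]
            intro x hx
            simp at hx
            rcases hx with rfl | rfl <;> simp [hT]
          rw [this]
          simp
        have key2 : 1 ≤ ((spider k).neighborFinset (some (i, 2)) ∩ T).card ∧
            ((spider k).neighborFinset (some (i, 2)) ∩ T).card ≤ 2 := by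
          rw [spider_nbr_c]
          have : ({some (i, 1)} : Finset (Option (Fin k × Fin 3))) ∩ T =
              {some (i, 1)} := by
            rw [Finset.inter_eq_left]
            intro x hx
            simp at hx
            subst hx
            simp [hT]
          rw [this]
          simp
        fin_cases j
        · exact key0
        · exact absurd rfl hj
        · exact key2
    · rw [Finset.card_insert_of_notMem (by simp), Finset.card_image_of_injective _
        (fun a b h => by simpa using h)]
      simp
  · -- lower bound
    rintro n ⟨S, hS, rfl⟩
    have hbc : ∀ i : Fin k, some (i, 1) ∈ S ∨ some (i, 2) ∈ S := by
      intro i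
      by_cases hc : some (i, 2) ∈ S
      · exact Or.inr hc
      · have h1 := (hS _ hc).1
        rw [spider_nbr_c] at h1
        obtain ⟨x, hx⟩ := Finset.card_pos.mp h1
        simp only [Finset.mem_inter, Finset.mem_singleton] at hx
        exact Or.inl (hx.1 ▸ hx.2)
    have hcard : S.card = ∑ x : Option (Fin k),
        (S.filter fun v => Option.map Prod.fst v = x).card :=
      Finset.card_eq_sum_card_fiberwise (fun x _ => Finset.mem_univ _)
    have hleg : ∀ i : Fin k,
        1 ≤ (S.filter fun v => Option.map Prod.fst v = some i).card := by
      intro i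
      rcases hbc i with h | h
      · exact Finset.card_pos.mpr ⟨some (i, 1), by simp [Finset.mem_filter, h]⟩
      · exact Finset.card_pos.mpr ⟨some (i, 2), by simp [Finset.mem_filter, h]⟩
    rw [hcard, Fintype.sum_option]
    by_cases hr : none ∈ S
    · have h0 : 1 ≤ (S.filter fun v : Option (Fin k × Fin 3) =>
          Option.map Prod.fst v = none).card :=
        Finset.card_pos.mpr ⟨none, by simp [Finset.mem_filter, hr]⟩
      calc k + 1 = 1 + ∑ _i : Fin k, 1 := by simp [add_comm]
        _ ≤ _ := add_le_add h0 (Finset.sum_le_sum fun i _ => hleg i)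
    · have h1 := (hS none hr).1
      obtain ⟨x, hx⟩ := Finset.card_pos.mp h1
      simp only [Finset.mem_inter, SimpleGraph.mem_neighborFinset] at hx
      obtain ⟨i₀, rfl⟩ := (spider_adj_root k x).mp hx.1
      have ha : some (i₀, 0) ∈ S := hx.2
      have hleg0 : 2 ≤ (S.filter fun v => Option.map Prod.fst v = some i₀).card := by
        rcases hbc i₀ with h | h
        · exact Finset.one_lt_card.mpr ⟨some (i₀, 0), by simp [Finset.mem_filter, ha],
            some (i₀, 1), by simp [Finset.mem_filter, h], by simp⟩
        · exact Finset.one_lt_card.mpr ⟨some (i₀, 0), by simp [Finset.mem_filter, ha],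
            some (i₀, 2), by simp [Finset.mem_filter, h], by simp⟩
      calc k + 1 = 0 + ∑ i : Fin k, (1 + if i = i₀ then 1 else 0) := by
            rw [Finset.sum_add_distrib, Finset.sum_ite_eq' Finset.univ i₀ fun _ => 1]
            simp
        _ ≤ _ := by
            refine add_le_add (Nat.zero_le _) (Finset.sum_le_sum fun i _ => ?_)
            by_cases hi : i = i₀
            · subst hi; simpa using hleg0
            · simpa [hi] using hleg i
end

section
/- For every k ≥ 1 and every function f : Fin k → Bool, the set S_f = {r} ∪ {b_i : f(i) = true} ∪ {c_i : f(i) = false} is a [1,2]-set of the spider tree T_k of cardinality k + 1, and the map f ↦ S_f is injective. -/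
/-- The set `S_f = {r} ∪ {b_i : f i = true} ∪ {c_i : f i = false}`. -/
def Sf (k : ℕ) (f : Fin k → Bool) : Finset (Option (Fin k × Fin 3)) :=
  insert none
    (Finset.image
      (fun i : Fin k => if f i then some (i, (1 : Fin 3)) else some (i, (2 : Fin 3)))
      Finset.univ)

lemma mem_Sf {k : ℕ} {f : Fin k → Bool} {x : Option (Fin k × Fin 3)} :
    x ∈ Sf k f ↔ x = none ∨
      ∃ i, (if f i then some (i, (1 : Fin 3)) else some (i, (2 : Fin 3))) = x := by
  simp [Sf]

lemma mem_b_Sf {k : ℕ} {f : Fin k → Bool} {i : Fin k} :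
    some (i, (1 : Fin 3)) ∈ Sf k f ↔ f i = true := by
  rw [mem_Sf]
  constructor
  · rintro (h | ⟨j, hj⟩)
    · simp at h
    · by_cases h : f j <;> simp [h] at hj
      exact hj ▸ h
  · intro h
    exact Or.inr ⟨i, by simp [h]⟩

lemma mem_c_Sf {k : ℕ} {f : Fin k → Bool} {i : Fin k} :
    some (i, (2 : Fin 3)) ∈ Sf k f ↔ f i = false := by
  rw [mem_Sf]
  constructor
  · rintro (h | ⟨j, hj⟩)
    · simp at h
    · by_cases h : f j <;> simp [h] at hj
      simp [← hj, h]
  · intro h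
    exact Or.inr ⟨i, by simp [h]⟩

lemma neighbors_a {k : ℕ} (i : Fin k) :
    (spider k).neighborFinset (some (i, (0 : Fin 3))) =
      {none, some (i, (1 : Fin 3))} := by
  ext x
  simp only [SimpleGraph.mem_neighborFinset]
  rcases x with _ | ⟨i', j'⟩
  · simp [SimpleGraph.mem_neighborFinset, spider, spiderAdj]
  · fin_cases j' <;>
      simp [SimpleGraph.mem_neighborFinset, spider, spiderAdj, @eq_comm _ i']

lemma neighbors_b {k : ℕ} (i : Fin k) :
    (spider k).neighborFinset (some (i, (1 : Fin 3))) =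
      {some (i, (0 : Fin 3)), some (i, (2 : Fin 3))} := by
  ext x
  simp only [SimpleGraph.mem_neighborFinset]
  rcases x with _ | ⟨i', j'⟩
  · simp [SimpleGraph.mem_neighborFinset, spider, spiderAdj]
  · fin_cases j' <;>
      simp [SimpleGraph.mem_neighborFinset, spider, spiderAdj, @eq_comm _ i']

lemma neighbors_c {k : ℕ} (i : Fin k) :
    (spider k).neighborFinset (some (i, (2 : Fin 3))) =
      {some (i, (1 : Fin 3))} := by
  ext x
  simp only [SimpleGraph.mem_neighborFinset]
  rcases x with _ | ⟨i', j'⟩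
  · simp [SimpleGraph.mem_neighborFinset, spider, spiderAdj]
  · fin_cases j' <;>
      simp [SimpleGraph.mem_neighborFinset, spider, spiderAdj, @eq_comm _ i']

theorem spider_Sf_isOneTwoSet_and_injective (k : ℕ) (hk : 1 ≤ k) :
    (∀ f : Fin k → Bool, IsOneTwoSet (spider k) (Sf k f) ∧ (Sf k f).card = k + 1) ∧
    Function.Injective (Sf k) := by
  constructor
  · intro f
    constructor
    · intro v hv
      have hnone : none ∈ Sf k f := by simp [Sf]
      match v with
      | none => exact absurd hnone hv
      | some (i, j) =>
        fin_cases j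
        · -- a_i
          show 1 ≤ ((spider k).neighborFinset (some (i, (0:Fin 3))) ∩ Sf k f).card ∧
            ((spider k).neighborFinset (some (i, (0:Fin 3))) ∩ Sf k f).card ≤ 2
          rw [neighbors_a]
          constructor
          · exact Finset.card_pos.mpr ⟨none, Finset.mem_inter.mpr ⟨by simp, hnone⟩⟩
          · calc ({none, some (i, (1:Fin 3))} ∩ Sf k f).card
                ≤ ({none, some (i, (1:Fin 3))} : Finset _).card :=
                  Finset.card_le_card (Finset.inter_subset_left)
              _ ≤ 2 := Finset.card_insert_le _ _ |>.trans (by simp)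
        · -- b_i, must have f i = false
          have hfi : f i = false := by
            by_contra h
            exact hv (mem_b_Sf.mpr (by simpa using h))
          show 1 ≤ ((spider k).neighborFinset (some (i, (1:Fin 3))) ∩ Sf k f).card ∧
            ((spider k).neighborFinset (some (i, (1:Fin 3))) ∩ Sf k f).card ≤ 2
          rw [neighbors_b]
          constructor
          · exact Finset.card_pos.mpr ⟨some (i, (2:Fin 3)),
              Finset.mem_inter.mpr ⟨by simp, mem_c_Sf.mpr hfi⟩⟩
          · calc ({some (i, (0:Fin 3)), some (i, (2:Fin 3))} ∩ Sf k f).card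
                ≤ ({some (i, (0:Fin 3)), some (i, (2:Fin 3))} : Finset _).card :=
                  Finset.card_le_card (Finset.inter_subset_left)
              _ ≤ 2 := Finset.card_insert_le _ _ |>.trans (by simp)
        · -- c_i, must have f i = true
          have hfi : f i = true := by
            by_contra h
            exact hv (mem_c_Sf.mpr (by simpa using h))
          show 1 ≤ ((spider k).neighborFinset (some (i, (2:Fin 3))) ∩ Sf k f).card ∧
            ((spider k).neighborFinset (some (i, (2:Fin 3))) ∩ Sf k f).card ≤ 2
          rw [neighbors_c]
          constructor
          · exact Finset.card_pos.mpr ⟨some (i, (1:Fin 3)),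
              Finset.mem_inter.mpr ⟨by simp, mem_b_Sf.mpr hfi⟩⟩
          · calc ({some (i, (1:Fin 3))} ∩ Sf k f).card
                ≤ ({some (i, (1:Fin 3))} : Finset _).card :=
                  Finset.card_le_card (Finset.inter_subset_left)
              _ ≤ 2 := by simp
    · -- cardinality
      have hinj : Function.Injective
          (fun i : Fin k => if f i then some (i, (1:Fin 3)) else some (i, (2:Fin 3))) := by
        intro a b h
        dsimp at h
        split_ifs at h <;> simp_all
      rw [Sf, Finset.card_insert_of_notMem (by simp only [Finset.mem_image]; rintro ⟨a, -, h⟩; split_ifs at h <;> simp at h), Finset.card_image_of_injective _ hinj]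
      simp [Nat.add_comm]
  · intro f g h
    funext i
    have h1 : f i = true ↔ g i = true := by
      rw [← mem_b_Sf (f := f), h, mem_b_Sf]
    cases hf : f i <;> cases hg : g i <;> simp_all
end

section
/- For every k ≥ 1, the spider tree T_k has at least 2^k distinct [1,2]-sets of minimum cardinality k + 1; that is, the number of γ_{[1,2]}-sets of T_k is at least 2^k. -/
open scoped Classical

lemma mem_nbhd {k : ℕ} (v w : Option (Fin k × Fin 3)) :
    w ∈ (spider k).neighborFinset v ↔ spiderAdj k v w = true := by
  rw [SimpleGraph.mem_neighborFinset]; rfl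

lemma nbhd_r {k : ℕ} :
    (spider k).neighborFinset none = Finset.univ.image (fun i : Fin k => some (i, (0 : Fin 3))) := by
  ext w
  rw [mem_nbhd]
  rcases w with _ | ⟨i', j'⟩ <;> simp [spiderAdj]
  fin_cases j' <;> simp [eq_comm]

lemma nbhd_a {k : ℕ} (i : Fin k) :
    (spider k).neighborFinset (some (i, 0)) = {none, some (i, 1)} := by
  ext w
  rw [mem_nbhd]
  rcases w with _ | ⟨i', j'⟩ <;> simp [spiderAdj]
  fin_cases j' <;> simp [eq_comm]

lemma nbhd_b {k : ℕ} (i : Fin k) :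
    (spider k).neighborFinset (some (i, 1)) = {some (i, 0), some (i, 2)} := by
  ext w
  rw [mem_nbhd]
  rcases w with _ | ⟨i', j'⟩ <;> simp [spiderAdj]
  fin_cases j' <;> simp [eq_comm]

lemma nbhd_c {k : ℕ} (i : Fin k) :
    (spider k).neighborFinset (some (i, 2)) = {some (i, 1)} := by
  ext w
  rw [mem_nbhd]
  rcases w with _ | ⟨i', j'⟩ <;> simp [spiderAdj]
  fin_cases j' <;> simp [eq_comm]

/-- Every `[1,2]`-set of the spider has at least `k+1` vertices. -/
lemma spider_lower_bound {k : ℕ} (S : Finset (Option (Fin k × Fin 3)))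
    (hS : IsOneTwoSet (spider k) S) : k + 1 ≤ S.card := by
  set g : Fin k → Option (Fin k × Fin 3) :=
    fun i => if some (i, 1) ∈ S then some (i, 1) else some (i, 2) with hgdef
  have hgS : ∀ i, g i ∈ S := by
    intro i
    simp only [hgdef]
    split_ifs with h
    · exact h
    · by_contra hc
      have h1 := (hS (some (i, 2)) hc).1
      obtain ⟨w, hw⟩ := Finset.card_pos.mp h1
      rw [Finset.mem_inter, nbhd_c, Finset.mem_singleton] at hw
      exact h (hw.1 ▸ hw.2)
  have hginj : Function.Injective g := by
    intro a b hab
    simp only [hgdef] at hab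
    split_ifs at hab <;> simp_all
  -- find an extra vertex: either the root or some `a_i`
  have hextra : ∃ x ∈ S, ∀ i, x ≠ g i := by
    by_cases hr : (none : Option (Fin k × Fin 3)) ∈ S
    · exact ⟨none, hr, fun i => by simp only [hgdef]; split_ifs <;> simp⟩
    · have h1 := (hS none hr).1
      obtain ⟨w, hw⟩ := Finset.card_pos.mp h1
      rw [Finset.mem_inter, nbhd_r, Finset.mem_image] at hw
      obtain ⟨⟨i, _, rfl⟩, hwS⟩ := hw
      refine ⟨some (i, 0), hwS, fun i' => ?_⟩
      simp only [hgdef]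
      split_ifs <;> simp [Prod.ext_iff]
  obtain ⟨x, hxS, hx⟩ := hextra
  have hsub : insert x (Finset.univ.image g) ⊆ S := by
    intro y hy
    rw [Finset.mem_insert] at hy
    rcases hy with rfl | hy
    · exact hxS
    · obtain ⟨i, _, rfl⟩ := Finset.mem_image.mp hy
      exact hgS i
  have hxnot : x ∉ Finset.univ.image g := by
    simp only [Finset.mem_image]
    rintro ⟨i, _, hi⟩
    exact hx i hi.symm
  calc k + 1 = (insert x (Finset.univ.image g)).card := by
        rw [Finset.card_insert_of_notMem hxnot, Finset.card_image_of_injective _ hginj,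
          Finset.card_univ, Fintype.card_fin]
    _ ≤ S.card := Finset.card_le_card hsub

/-- The family of minimum `[1,2]`-sets indexed by `f : Fin k → Bool`. -/
def Ff (k : ℕ) (f : Fin k → Bool) : Finset (Option (Fin k × Fin 3)) :=
  insert none (Finset.univ.image (fun i : Fin k => some (i, if f i then 1 else 2)))

lemma mem_Ff {k : ℕ} (f : Fin k → Bool) (x : Option (Fin k × Fin 3)) :
    x ∈ Ff k f ↔ x = none ∨ ∃ i : Fin k, x = some (i, if f i then 1 else 2) := by
  simp only [Ff, Finset.mem_insert, Finset.mem_image, Finset.mem_univ, true_and]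
  constructor
  · rintro (h | ⟨i, h⟩)
    · exact Or.inl h
    · exact Or.inr ⟨i, h.symm⟩
  · rintro (h | ⟨i, h⟩)
    · exact Or.inl h
    · exact Or.inr ⟨i, h.symm⟩

lemma some_mem_Ff {k : ℕ} (f : Fin k → Bool) (i : Fin k) (j : Fin 3) :
    some (i, j) ∈ Ff k f ↔ j = (if f i then 1 else 2) := by
  rw [mem_Ff]
  constructor
  · rintro (h | ⟨i', h⟩)
    · simp at h
    · rw [Option.some_inj, Prod.ext_iff] at h
      obtain ⟨h1, h2⟩ := h
      cases h1
      exact h2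
  · rintro rfl
    exact Or.inr ⟨i, rfl⟩

lemma Ff_card {k : ℕ} (f : Fin k → Bool) : (Ff k f).card = k + 1 := by
  rw [Ff, Finset.card_insert_of_notMem (by simp), Finset.card_image_of_injective,
    Finset.card_univ, Fintype.card_fin]
  intro a b hab
  simp only [Option.some_inj, Prod.mk.injEq] at hab
  exact hab.1

lemma Ff_isOneTwoSet {k : ℕ} (f : Fin k → Bool) : IsOneTwoSet (spider k) (Ff k f) := by
  intro v hv
  rcases v with _ | ⟨i, j⟩
  · exact absurd (by rw [mem_Ff]; exact Or.inl rfl) hv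
  · rw [some_mem_Ff] at hv
    have hj3 : ∀ j : Fin 3, j = 0 ∨ j = 1 ∨ j = 2 := by decide
    rcases hj3 j with rfl | rfl | rfl
    · -- a_i : neighbors {none, b_i}
      constructor
      · refine Finset.card_pos.mpr ⟨none, ?_⟩
        rw [Finset.mem_inter, nbhd_a]
        exact ⟨by simp, by rw [mem_Ff]; exact Or.inl rfl⟩
      · calc ((spider k).neighborFinset (some (i, 0)) ∩ Ff k f).card
            ≤ ((spider k).neighborFinset (some (i, 0))).card := Finset.card_le_card Finset.inter_subset_left
          _ ≤ 2 := by rw [nbhd_a]; exact (Finset.card_insert_le _ _).trans (by simp)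
    · -- b_i, with f i = false; c_i ∈ S
      have hfi : f i = false := by
        by_contra h
        rw [Bool.not_eq_false] at h
        exact hv (by simp [h])
      constructor
      · refine Finset.card_pos.mpr ⟨some (i, 2), ?_⟩
        rw [Finset.mem_inter, nbhd_b, some_mem_Ff]
        exact ⟨by simp, by simp [hfi]⟩
      · calc ((spider k).neighborFinset (some (i, 1)) ∩ Ff k f).card
            ≤ ((spider k).neighborFinset (some (i, 1))).card := Finset.card_le_card Finset.inter_subset_left
          _ ≤ 2 := by rw [nbhd_b]; exact (Finset.card_insert_le _ _).trans (by simp)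
    · -- c_i, with f i = true; b_i ∈ S
      have hfi : f i = true := by
        by_contra h
        rw [Bool.not_eq_true] at h
        exact hv (by simp [h])
      constructor
      · refine Finset.card_pos.mpr ⟨some (i, 1), ?_⟩
        rw [Finset.mem_inter, nbhd_c, some_mem_Ff]
        exact ⟨by simp, by simp [hfi]⟩
      · calc ((spider k).neighborFinset (some (i, 2)) ∩ Ff k f).card
            ≤ ((spider k).neighborFinset (some (i, 2))).card := Finset.card_le_card Finset.inter_subset_left
          _ ≤ 2 := by rw [nbhd_c]; simp

lemma Ff_inj {k : ℕ} : Function.Injective (Ff k) := by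
  intro f g hfg
  funext i
  have h1 := (some_mem_Ff f i (if f i then 1 else 2)).mpr rfl
  rw [hfg, some_mem_Ff] at h1
  cases hf : f i <;> cases hg : g i
  · rfl
  · rw [if_neg (by simp [hf]), if_pos hg] at h1
    exact absurd h1 (by decide)
  · rw [if_pos hf, if_neg (by simp [hg])] at h1
    exact absurd h1 (by decide)
  · rfl

theorem spider_card_min_oneTwoSets_ge (k : ℕ) (hk : 1 ≤ k) :
    2 ^ k ≤ (Finset.univ.filter
      (fun S : Finset (Option (Fin k × Fin 3)) =>
        IsOneTwoSet (spider k) S ∧ S.card = k + 1 ∧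
        ∀ S' : Finset (Option (Fin k × Fin 3)),
          IsOneTwoSet (spider k) S' → k + 1 ≤ S'.card)).card := by
  have := Finset.card_le_card_of_injOn (f := Ff k)
    (s := (Finset.univ : Finset (Fin k → Bool)))
    (t := Finset.univ.filter
      (fun S : Finset (Option (Fin k × Fin 3)) =>
        IsOneTwoSet (spider k) S ∧ S.card = k + 1 ∧
        ∀ S' : Finset (Option (Fin k × Fin 3)),
          IsOneTwoSet (spider k) S' → k + 1 ≤ S'.card))
    (fun f _ => by
      rw [Finset.mem_coe, Finset.mem_filter]
      exact ⟨Finset.mem_univ _, Ff_isOneTwoSet f, Ff_card f,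
        fun S' hS' => spider_lower_bound S' hS'⟩)
    (fun a _ b _ h => Ff_inj h)
  simpa using this
end

section
/- Not every tree has a total [1,2]-set: the subdivided star S(K_{1,3}), i.e. the tree on the 7 vertices {c, a_1, a_2, a_3, l_1, l_2, l_3} with edges c–a_i and a_i–l_i for i = 1,2,3, has no total [1,2]-set. -/
/-- `S` is a total `[1,2]`-set of `G`: every vertex of `G` (whether in `S` or
not) has at least one and at most two neighbors in `S`. -/
def IsTotalOneTwoSet {V : Type*} (G : SimpleGraph V) (S : Set V) : Prop :=
  ∀ v : V, 1 ≤ (G.neighborSet v ∩ S).ncard ∧ (G.neighborSet v ∩ S).ncard ≤ 2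

/-- The subdivided star `S(K_{1,3})`: center `0`, support vertices `1,2,3`,
leaves `4,5,6`, with edges `0–1, 0–2, 0–3, 1–4, 2–5, 3–6`. -/
def subdividedStarEdges : List (Fin 7 × Fin 7) := [(0, 1), (0, 2), (0, 3), (1, 4), (2, 5), (3, 6)]

def subdividedStar : SimpleGraph (Fin 7) where
  Adj x y := (x, y) ∈ subdividedStarEdges ∨ (y, x) ∈ subdividedStarEdges
  symm := ⟨fun _ _ h => h.symm⟩
  loopless := ⟨fun x h => by revert h; fin_cases x <;> decide⟩

lemma leaf_nbr (l a : Fin 7) (he : subdividedStar.neighborSet l = {a})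
    (S : Set (Fin 7)) (h : IsTotalOneTwoSet subdividedStar S) : a ∈ S := by
  have h1 := (h l).1
  rw [he] at h1
  obtain ⟨x, hx⟩ := Set.nonempty_of_ncard_ne_zero (Nat.one_le_iff_ne_zero.mp h1)
  obtain ⟨hx1, hx2⟩ := hx
  simp at hx1
  rwa [hx1] at hx2

theorem subdividedStar_no_totalOneTwoSet :
    ¬ ∃ S : Set (Fin 7), IsTotalOneTwoSet subdividedStar S := by
  rintro ⟨S, h⟩
  have e4 : subdividedStar.neighborSet 4 = {1} := by
    ext y; fin_cases y <;> simp [SimpleGraph.neighborSet, subdividedStar, subdividedStarEdges]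
  have e5 : subdividedStar.neighborSet 5 = {2} := by
    ext y; fin_cases y <;> simp [SimpleGraph.neighborSet, subdividedStar, subdividedStarEdges]
  have e6 : subdividedStar.neighborSet 6 = {3} := by
    ext y; fin_cases y <;> simp [SimpleGraph.neighborSet, subdividedStar, subdividedStarEdges]
  have h1 : (1 : Fin 7) ∈ S := leaf_nbr 4 1 e4 S h
  have h2 : (2 : Fin 7) ∈ S := leaf_nbr 5 2 e5 S h
  have h3 : (3 : Fin 7) ∈ S := leaf_nbr 6 3 e6 S h
  have e0 : subdividedStar.neighborSet 0 = {1, 2, 3} := by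
    ext y; fin_cases y <;> simp [SimpleGraph.neighborSet, subdividedStar, subdividedStarEdges]
  have hsub : ({1, 2, 3} : Set (Fin 7)) ∩ S = {1, 2, 3} := by
    apply Set.inter_eq_left.mpr
    intro x hx
    rcases hx with rfl | rfl | rfl <;> assumption
  have h0 := (h 0).2
  rw [e0, hsub] at h0
  have : ({1, 2, 3} : Set (Fin 7)).ncard = 3 := by
    rw [Set.ncard_insert_of_notMem (by decide), Set.ncard_insert_of_notMem (by decide),
      Set.ncard_singleton]
  omega
end

section
/- (Rule 1) Let T be a finite tree on vertex set V, let S be a total [1,2]-set of T, and let v ∈ S. Form the graph T₁ on V ⊕ Unit by keeping all edges of T (on the left summand) and adding the single edge between (inl v) and the new vertex (inr ()). Then T₁ is a tree and the image of S under inl is a total [1,2]-set of T₁. -/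
open SimpleGraph Sum

/-- The graph obtained from `T` by adding one new vertex `Sum.inr ()` joined
to `v` by a single edge. -/
def addLeaf {V : Type*} (T : SimpleGraph V) (v : V) : SimpleGraph (V ⊕ Unit) :=
  T.map Sum.inl ⊔
    SimpleGraph.fromEdgeSet {s(Sum.inl v, Sum.inr ())}

lemma addLeaf_adj {V : Type*} {T : SimpleGraph V} {v : V} (a b : V ⊕ Unit) :
    (addLeaf T v).Adj a b ↔ ((∃ u w, T.Adj u w ∧ inl u = a ∧ inl w = b) ∨
      (a = inl v ∧ b = inr ()) ∨ (a = inr () ∧ b = inl v)) := by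
  have hm : ∀ x y : V ⊕ Unit, (T.map Sum.inl).Adj x y ↔ ∃ u w, T.Adj u w ∧ inl u = x ∧ inl w = y :=
    fun x y => map_adj (⟨Sum.inl, Sum.inl_injective⟩ : V ↪ V ⊕ Unit) T x y
  simp only [addLeaf, sup_adj, hm, Function.Embedding.coeFn_mk,
    fromEdgeSet_adj, Set.mem_singleton_iff, Sym2.eq, Sym2.rel_iff', Prod.mk.injEq,
    Prod.swap_prod_mk]
  constructor
  · rintro (h | ⟨(⟨rfl, rfl⟩ | ⟨rfl, rfl⟩), hne⟩)
    · exact Or.inl h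
    · exact Or.inr (Or.inl ⟨rfl, rfl⟩)
    · exact Or.inr (Or.inr ⟨rfl, rfl⟩)
  · rintro (h | ⟨rfl, rfl⟩ | ⟨rfl, rfl⟩)
    · exact Or.inl h
    · exact Or.inr ⟨Or.inl ⟨rfl, rfl⟩, by simp⟩
    · exact Or.inr ⟨Or.inr ⟨rfl, rfl⟩, by simp⟩

def leafHom {V : Type*} (T : SimpleGraph V) (v : V) : T →g addLeaf T v where
  toFun := Sum.inl
  map_rel' := fun h => (addLeaf_adj _ _).2 (Or.inl ⟨_, _, h, rfl, rfl⟩)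

lemma pull_walk {V : Type*} {T : SimpleGraph V} {v : V} :
    ∀ {a b : V ⊕ Unit} (p : (addLeaf T v).Walk a b), inr () ∉ p.support →
      ∀ (u w : V) (ha : a = inl u) (hb : b = inl w),
        ∃ q : T.Walk u w, q.map (leafHom T v) = p.copy ha hb := by
  intro a b p
  induction p with
  | nil =>
    intro _ u w ha hb
    subst ha
    obtain rfl : u = w := by injection hb
    exact ⟨SimpleGraph.Walk.nil, rfl⟩
  | @cons a b c h p ih =>
    intro hs u w ha hb
    subst ha
    have hb' : b ∈ p.support := p.start_mem_support
    have hbne : b ≠ inr () := by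
      rintro rfl
      exact hs (by simp)
    obtain ⟨x, rfl⟩ : ∃ x, b = inl x := by
      cases b with
      | inl x => exact ⟨x, rfl⟩
      | inr y => exact absurd rfl hbne
    have hT : T.Adj u x := by
      rcases (addLeaf_adj _ _).1 h with ⟨u', w', hadj, h1, h2⟩ | ⟨_, h2⟩ | ⟨h1, _⟩ <;>
        first
        | (obtain rfl : u' = u := by injection h1
           obtain rfl : w' = x := by injection h2
           exact hadj)
        | simp_all
    obtain ⟨q, hq⟩ := ih (fun hmem => hs (by simp [hmem])) x w rfl hb
    refine ⟨SimpleGraph.Walk.cons hT q, ?_⟩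
    subst hb
    have hq2 : q.map (leafHom T v) = p := by simpa using hq
    simp [hq2]
    rfl

lemma addLeaf_connected {V : Type*} {T : SimpleGraph V} {v : V} (hT : T.Connected) :
    (addLeaf T v).Connected := by
  have hvr : ∀ a : V ⊕ Unit, (addLeaf T v).Reachable a (inl v) := by
    rintro (u | u)
    · exact ((hT.preconnected u v).map (leafHom T v))
    · exact (SimpleGraph.Adj.reachable ((addLeaf_adj _ _).2 (Or.inr (Or.inr ⟨rfl, rfl⟩))))
  constructor
  intro a b
  exact (hvr a).trans (hvr b).symm

lemma addLeaf_acyclic {V : Type*} {T : SimpleGraph V} {v : V} (hT : T.IsAcyclic) :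
    (addLeaf T v).IsAcyclic := by
  classical
  intro a c hc
  have hnr : inr () ∉ c.support := by
    intro hmem
    have hc' : (c.rotate _ hmem).IsCycle := hc.rotate hmem
    obtain ⟨b, hadj, q, heq⟩ := SimpleGraph.Walk.not_nil_iff.1 hc'.not_nil
    obtain rfl : b = inl v := by
      rcases (addLeaf_adj _ _).1 hadj with ⟨u', w', _, h1, _⟩ | ⟨h1, _⟩ | ⟨_, h2⟩ <;>
        simp_all
    rw [heq] at hc'
    have hq := (SimpleGraph.Walk.cons_isCycle_iff _ _).1 hc'
    obtain ⟨b', hadj', r, heq'⟩ :=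
      q.reverse.exists_eq_cons_of_ne (by simp)
    obtain rfl : b' = inl v := by
      rcases (addLeaf_adj _ _).1 hadj' with ⟨u', w', _, h1, _⟩ | ⟨h1, _⟩ | ⟨_, h2⟩ <;>
        simp_all
    have hmem' : s(inr (), inl v) ∈ q.reverse.edges := by
      rw [heq']; simp
    rw [SimpleGraph.Walk.edges_reverse, List.mem_reverse] at hmem'
    exact hq.2 hmem'
  have ha : a ≠ inr () := fun h => hnr (h ▸ c.start_mem_support)
  obtain ⟨u, rfl⟩ : ∃ u, a = inl u := by
    cases a with
    | inl x => exact ⟨x, rfl⟩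
    | inr y => exact absurd rfl ha
  obtain ⟨q, hq⟩ := pull_walk c hnr u u rfl rfl
  rw [SimpleGraph.Walk.copy_rfl_rfl] at hq
  have hinj : Function.Injective (leafHom T v) := Sum.inl_injective
  have : q.IsCycle := by
    rw [← SimpleGraph.Walk.map_isCycle_iff_of_injective hinj, hq]
    exact hc
  exact hT q this

theorem rule1_addLeaf_totalOneTwoSet {V : Type*} [Fintype V]
    (T : SimpleGraph V) (hT : T.IsTree)
    (S : Set V) (hS : IsTotalOneTwoSet T S) (v : V) (hv : v ∈ S) :
    (addLeaf T v).IsTree ∧ IsTotalOneTwoSet (addLeaf T v) (Sum.inl '' S) := by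
  constructor
  · exact ⟨addLeaf_connected hT.isConnected, addLeaf_acyclic hT.IsAcyclic⟩
  · rintro (u | u)
    · have hset : (addLeaf T v).neighborSet (inl u) ∩ (inl '' S) =
          inl '' (T.neighborSet u ∩ S) := by
        ext b
        cases b with
        | inl w =>
          simp only [Set.mem_inter_iff, SimpleGraph.mem_neighborSet, addLeaf_adj,
            Set.mem_image]
          constructor
          · rintro ⟨h, x, hx, hxw⟩
            obtain rfl := Sum.inl_injective hxw
            rcases h with ⟨u', w', hadj, h1, h2⟩ | ⟨_, h2⟩ | ⟨h1, _⟩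
            · obtain rfl := Sum.inl_injective h1
              obtain rfl := Sum.inl_injective h2
              exact ⟨_, ⟨hadj, hx⟩, rfl⟩
            · simp_all
            · simp_all
          · rintro ⟨x, ⟨hadj, hx⟩, hxw⟩
            obtain rfl := Sum.inl_injective hxw
            exact ⟨Or.inl ⟨u, x, hadj, rfl, rfl⟩, x, hx, rfl⟩
        | inr y =>
          simp
      rw [hset, Set.ncard_image_of_injective _ Sum.inl_injective]
      exact hS u
    · have hset : (addLeaf T v).neighborSet (inr u) ∩ (inl '' S) = {inl v} := by
        ext b
        simp only [Set.mem_inter_iff, SimpleGraph.mem_neighborSet, addLeaf_adj,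
          Set.mem_image, Set.mem_singleton_iff]
        constructor
        · rintro ⟨⟨u', w', _, _, h2⟩ | ⟨h1, _⟩ | ⟨_, h2⟩, x, hx, hxb⟩ <;> simp_all
        · rintro rfl
          exact ⟨Or.inr (Or.inr ⟨by simp, rfl⟩), v, hv, rfl⟩
      rw [hset, Set.ncard_singleton]
      exact ⟨le_refl 1, one_le_two⟩
end

section
/- (Rule 3, two-vertex case) Let T be a finite tree on vertex set V, let S be a total [1,2]-set of T, and let u ∈ V \ S be a vertex with exactly one neighbor in S. Form the graph T₃ on V ⊕ Fin 2 by keeping all edges of T (on the left summand) and adding the path u–v–w, where v = inr 0 and w = inr 1 are new vertices (i.e. add edges {inl u, inr 0} and {inr 0, inr 1}). Then T₃ is a tree and (inl '' S) ∪ {v, w} is a total [1,2]-set of T₃. -/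
/-- The graph obtained from `T` by attaching a new path `u – inr 0 – inr 1`
of two new vertices at `u`. -/
def addPath2 {V : Type*} (T : SimpleGraph V) (u : V) : SimpleGraph (V ⊕ Fin 2) :=
  T.map (⟨Sum.inl, Sum.inl_injective⟩ : V ↪ V ⊕ Fin 2) ⊔
    SimpleGraph.fromEdgeSet
      {s(Sum.inl u, Sum.inr 0), s(Sum.inr 0, Sum.inr 1)}

open SimpleGraph Sum

/-- The natural hom from `G` to `G.map f`. -/
def mapHom {α β : Type*} (f : α ↪ β) (G : SimpleGraph α) : G →g G.map f :=
  ⟨f, fun h => (SimpleGraph.map_adj f G _ _).mpr ⟨_, _, h, rfl, rfl⟩⟩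

lemma exists_walk_map_aux {α β : Type*} (f : α ↪ β) (G : SimpleGraph α) :
    ∀ {s t : β} (p : (G.map f).Walk s t) {x y : α} (hx : f x = s) (hy : f y = t),
      ∃ q : G.Walk x y, q.map (mapHom f G) = p.copy hx.symm hy.symm := by
  intro s t p
  induction p with
  | nil =>
    intro x y hx hy
    subst hx
    have : y = x := f.injective hy
    subst this
    exact ⟨SimpleGraph.Walk.nil, rfl⟩
  | @cons s b t h p ih =>
    intro x y hx hy
    subst hx
    obtain ⟨a, b', hab, ha, hb⟩ := (SimpleGraph.map_adj f G _ _).mp h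
    have : a = x := f.injective ha
    subst this
    subst hb
    subst hy
    obtain ⟨q, hq⟩ := ih (x := b') (y := y) rfl rfl
    refine ⟨SimpleGraph.Walk.cons hab q, ?_⟩
    simp only [SimpleGraph.Walk.map_cons, SimpleGraph.Walk.copy_rfl_rfl] at *
    exact congrArg _ hq

lemma isAcyclic_map {α β : Type*} (f : α ↪ β) {G : SimpleGraph α}
    (hG : G.IsAcyclic) : (G.map f).IsAcyclic := by
  intro v c hc
  have hnn := hc.not_nil
  cases c with
  | nil => simp at hnn
  | cons h p =>
    obtain ⟨a, b', hab, ha, hb⟩ := (SimpleGraph.map_adj f G _ _).mp h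
    obtain ⟨q, hq⟩ := exists_walk_map_aux f G (SimpleGraph.Walk.cons h p)
      (x := a) (y := a) ha ha
    have : (q.map (mapHom f G)).IsCycle := by
      rw [hq]; exact (SimpleGraph.Walk.isCycle_copy ..).mpr hc
    have hqc : q.IsCycle :=
      (SimpleGraph.Walk.map_isCycle_iff_of_injective
        (f := mapHom f G) f.injective).mp this
    exact hG q hqc

lemma cycle_two_neighbors {W : Type*} {G : SimpleGraph W} {v x : W} {c : G.Walk v v}
    (hc : c.IsCycle) (hx : x ∈ c.support) :
    ∃ b b' : W, b ≠ b' ∧ G.Adj x b ∧ G.Adj x b' ∧ b ∈ c.support ∧ b' ∈ c.support := by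
  classical
  have hmem : ∀ z, z ∈ (c.rotate x hx).support → z ∈ c.support := by
    intro z hz
    rw [SimpleGraph.Walk.support_eq_cons, List.mem_cons] at hz
    rcases hz with hz | hz
    · exact hz ▸ hx
    · exact List.mem_of_mem_tail
        (((SimpleGraph.Walk.support_rotate c x hx).mem_iff).mp hz)
  have hrot := hc.rotate hx
  set d := c.rotate x hx with hd
  clear_value d
  cases d with
  | nil => exact absurd rfl hrot.ne_nil
  | @cons _ b _ h p =>
    rw [SimpleGraph.Walk.cons_isCycle_iff] at hrot
    have hbx : x ≠ b := h.ne
    obtain ⟨b2, h2, p2, hp2⟩ := SimpleGraph.Walk.exists_eq_cons_of_ne hbx p.reverse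
    refine ⟨b, b2, ?_, h, h2, ?_, ?_⟩
    · rintro rfl
      apply hrot.2
      have : s(x, b) ∈ p.reverse.edges := by
        rw [hp2]; simp
      simpa using this
    · exact hmem b (by simp)
    · apply hmem
      have : b2 ∈ p.reverse.support := by rw [hp2]; simp
      simp only [SimpleGraph.Walk.support_reverse, List.mem_reverse] at this
      simp [this]

lemma addPath2_adj {V : Type*} (T : SimpleGraph V) (u : V) (x y : V ⊕ Fin 2) :
    (addPath2 T u).Adj x y ↔
      (∃ a b, T.Adj a b ∧ Sum.inl a = x ∧ Sum.inl b = y) ∨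
      (x = Sum.inl u ∧ y = Sum.inr 0) ∨ (x = Sum.inr 0 ∧ y = Sum.inl u) ∨
      (x = Sum.inr 0 ∧ y = Sum.inr 1) ∨ (x = Sum.inr 1 ∧ y = Sum.inr 0) := by
  rw [addPath2, SimpleGraph.sup_adj, SimpleGraph.fromEdgeSet_adj, SimpleGraph.map_adj]
  constructor
  · rintro (⟨a, b, hab, ha, hb⟩ | ⟨hmem, hne⟩)
    · exact Or.inl ⟨a, b, hab, ha, hb⟩
    · simp only [Set.mem_insert_iff, Set.mem_singleton_iff, Sym2.eq_iff] at hmem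
      rcases hmem with (⟨rfl, rfl⟩ | ⟨rfl, rfl⟩) | (⟨rfl, rfl⟩ | ⟨rfl, rfl⟩) <;> tauto
  · rintro (⟨a, b, hab, rfl, rfl⟩ | ⟨rfl, rfl⟩ | ⟨rfl, rfl⟩ | ⟨rfl, rfl⟩ | ⟨rfl, rfl⟩)
    · exact Or.inl ⟨a, b, hab, rfl, rfl⟩
    all_goals refine Or.inr ⟨by simp, by simp⟩

/-- The natural hom from `T` into `addPath2 T u`. -/
def inlHom {V : Type*} (T : SimpleGraph V) (u : V) : T →g addPath2 T u :=
  ⟨Sum.inl, fun h => Or.inl ((SimpleGraph.map_adj _ T _ _).mpr ⟨_, _, h, rfl, rfl⟩)⟩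

theorem rule3_addPath2_totalOneTwoSet {V : Type*} [Fintype V]
    (T : SimpleGraph V) (hT : T.IsTree)
    (S : Set V) (hS : IsTotalOneTwoSet T S)
    (u : V) (huS : u ∉ S) (hone : (T.neighborSet u ∩ S).ncard = 1) :
    (addPath2 T u).IsTree ∧
    IsTotalOneTwoSet (addPath2 T u)
      (Sum.inl '' S ∪ {Sum.inr 0, Sum.inr 1}) := by
  classical
  -- basic adjacencies
  have hadj0 : (addPath2 T u).Adj (inl u) (inr 0) := by rw [addPath2_adj]; tauto
  have hadj1 : (addPath2 T u).Adj (inr 0) (inr 1) := by rw [addPath2_adj]; tauto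
  have fin2 : ∀ i : Fin 2, i = 0 ∨ i = 1 := by decide
  -- connectivity
  have hreach : ∀ z : V ⊕ Fin 2, (addPath2 T u).Reachable z (inl u) := by
    rintro (x | i)
    · exact SimpleGraph.Reachable.map (inlHom T u) (hT.isConnected.preconnected x u)
    · rcases fin2 i with rfl | rfl
      · exact hadj0.symm.reachable
      · exact (hadj1.symm.reachable).trans hadj0.symm.reachable
  have hne : Nonempty (V ⊕ Fin 2) := ⟨inl u⟩
  have hconn : (addPath2 T u).Connected :=
    SimpleGraph.Connected.mk fun a b => (hreach a).trans (hreach b).symm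
  -- acyclicity
  have hacyc : (addPath2 T u).IsAcyclic := by
    intro v c hc
    have h1 : inr 1 ∉ c.support := by
      intro hmem
      obtain ⟨b, b', hbb, hb, hb', _, _⟩ := cycle_two_neighbors hc hmem
      rw [addPath2_adj] at hb hb'
      have eb : b = inr 0 := by
        rcases hb with ⟨a, b0, _, ha, _⟩ | h | h | h | h <;> simp_all
      have eb' : b' = inr 0 := by
        rcases hb' with ⟨a, b0, _, ha, _⟩ | h | h | h | h <;> simp_all
      exact hbb (eb.trans eb'.symm)
    have h0 : inr 0 ∉ c.support := by
      intro hmem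
      obtain ⟨b, b', hbb, hb, hb', hbs, hbs'⟩ := cycle_two_neighbors hc hmem
      rw [addPath2_adj] at hb hb'
      have eb : b = inl u ∨ b = inr 1 := by
        rcases hb with ⟨a, b0, _, ha, _⟩ | h | h | h | h <;> simp_all
      have eb' : b' = inl u ∨ b' = inr 1 := by
        rcases hb' with ⟨a, b0, _, ha, _⟩ | h | h | h | h <;> simp_all
      rcases eb with rfl | rfl
      · rcases eb' with rfl | rfl
        · exact hbb rfl
        · exact h1 hbs'
      · exact h1 hbs
    have hedges : ∀ e ∈ c.edges, e ∈ (T.map (⟨Sum.inl, Sum.inl_injective⟩ : V ↪ V ⊕ Fin 2)).edgeSet := by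
      intro e he
      induction e using Sym2.ind with
      | _ a b =>
        have hadj : (addPath2 T u).Adj a b := c.adj_of_mem_edges he
        have has : a ∈ c.support := SimpleGraph.Walk.fst_mem_support_of_mem_edges c he
        have hbs : b ∈ c.support := SimpleGraph.Walk.snd_mem_support_of_mem_edges c he
        rw [addPath2_adj] at hadj
        rcases hadj with ⟨a', b', h', ha', hb'⟩ | ⟨rfl, rfl⟩ | ⟨rfl, rfl⟩ | ⟨rfl, rfl⟩ | ⟨rfl, rfl⟩
        · exact (T.map (⟨Sum.inl, Sum.inl_injective⟩ : V ↪ V ⊕ Fin 2)).mem_edgeSet.mpr ((SimpleGraph.map_adj _ T _ _).mpr ⟨a', b', h', ha', hb'⟩)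
        · exact absurd hbs h0
        · exact absurd has h0
        · exact absurd has h0
        · exact absurd hbs h0
    exact isAcyclic_map ⟨Sum.inl, Sum.inl_injective⟩ hT.IsAcyclic
      (c.transfer _ hedges) (hc.transfer hedges)
  refine ⟨⟨hconn, hacyc⟩, ?_⟩
  -- total [1,2]-set property
  set S' : Set (V ⊕ Fin 2) := Sum.inl '' S ∪ {Sum.inr 0, Sum.inr 1} with hS'
  have hinlS : ∀ a : V, inl a ∈ S' ↔ a ∈ S := by
    intro a; simp [hS', Sum.inl_injective.mem_set_image]
  have hinr0S : (inr 0 : V ⊕ Fin 2) ∈ S' := by simp [hS']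
  have hinr1S : (inr 1 : V ⊕ Fin 2) ∈ S' := by simp [hS']
  rintro (x | i)
  · by_cases hxu : x = u
    · subst hxu
      have hset : (addPath2 T x).neighborSet (inl x) ∩ S' =
          insert (inr 0) (Sum.inl '' (T.neighborSet x ∩ S)) := by
        ext z
        simp only [Set.mem_inter_iff, SimpleGraph.mem_neighborSet, Set.mem_insert_iff,
          Set.mem_image, Set.mem_inter_iff]
        constructor
        · rintro ⟨hadj, hz⟩
          rw [addPath2_adj] at hadj
          rcases hadj with ⟨a, b, hab, ha, hb⟩ | ⟨_, rfl⟩ | ⟨h, _⟩ | ⟨h, _⟩ | ⟨h, _⟩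
          · obtain rfl : a = x := Sum.inl_injective ha
            refine Or.inr ⟨b, ⟨hab, ?_⟩, hb⟩
            rw [← hb] at hz
            exact (hinlS b).mp hz
          · exact Or.inl rfl
          · simp at h
          · simp at h
          · simp at h
        · rintro (rfl | ⟨a, ⟨ha, haS⟩, rfl⟩)
          · exact ⟨hadj0, hinr0S⟩
          · refine ⟨?_, (hinlS a).mpr haS⟩
            rw [addPath2_adj]
            exact Or.inl ⟨x, a, ha, rfl, rfl⟩
      rw [hset, Set.ncard_insert_of_notMem (by simp) ((Set.toFinite _).image _),
        Set.ncard_image_of_injective _ Sum.inl_injective, hone]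
      norm_num
    · have hset : (addPath2 T u).neighborSet (inl x) ∩ S' =
          Sum.inl '' (T.neighborSet x ∩ S) := by
        ext z
        simp only [Set.mem_inter_iff, SimpleGraph.mem_neighborSet, Set.mem_image,
          Set.mem_inter_iff]
        constructor
        · rintro ⟨hadj, hz⟩
          rw [addPath2_adj] at hadj
          rcases hadj with ⟨a, b, hab, ha, hb⟩ | ⟨h, _⟩ | ⟨h, _⟩ | ⟨h, _⟩ | ⟨h, _⟩
          · obtain rfl : a = x := Sum.inl_injective ha
            refine ⟨b, ⟨hab, ?_⟩, hb⟩
            rw [← hb] at hz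
            exact (hinlS b).mp hz
          · exact absurd (Sum.inl_injective h) hxu
          · simp at h
          · simp at h
          · simp at h
        · rintro ⟨a, ⟨ha, haS⟩, rfl⟩
          refine ⟨?_, (hinlS a).mpr haS⟩
          rw [addPath2_adj]
          exact Or.inl ⟨x, a, ha, rfl, rfl⟩
      rw [hset, Set.ncard_image_of_injective _ Sum.inl_injective]
      exact hS x
  · have key : ∀ j : Fin 2, (addPath2 T u).neighborSet (inr j) ∩ S' =
        (if j = 0 then {inr 1} else {inr 0}) := by
      intro j
      ext z
      simp only [Set.mem_inter_iff, SimpleGraph.mem_neighborSet]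
      constructor
      · rintro ⟨hadj, hz⟩
        rw [addPath2_adj] at hadj
        rcases hadj with ⟨a, b, hab, ha, hb⟩ | ⟨h, _⟩ | ⟨hj, rfl⟩ | ⟨hj, rfl⟩ | ⟨hj, rfl⟩
        · simp at ha
        · simp at h
        · -- z = inl u contradicts u ∉ S
          obtain rfl : j = (0 : Fin 2) := by simpa using hj
          exact absurd ((hinlS u).mp hz) huS
        · obtain rfl : j = (0 : Fin 2) := by simpa using hj
          simp
        · obtain rfl : j = (1 : Fin 2) := by simpa using hj
          simp
      · intro hz
        rcases fin2 j with rfl | rfl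
        · simp only [if_pos rfl, Set.mem_singleton_iff] at hz
          subst hz
          exact ⟨hadj1, hinr1S⟩
        · have h10 : (1 : Fin 2) ≠ 0 := by decide
          simp only [if_neg h10, Set.mem_singleton_iff] at hz
          subst hz
          exact ⟨hadj1.symm, hinr0S⟩
    rcases fin2 i with rfl | rfl
    · rw [key 0, if_pos rfl, Set.ncard_singleton]; norm_num
    · rw [key 1, if_neg (by decide), Set.ncard_singleton]; norm_num
end
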